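/- Let E be a real normed vector space, let α ≥ 1, 0 < β ≤ 1, γ > 0, r > 0 be constants, and let ρ : E → ℝ be an admissible distance with constants α, β, γ, r. Set δ = min(r, γ)/(4α). Then for all x, y ∈ E with ‖x‖ < δ and ‖y‖ < δ, one has ρ(x + y) ≤ (α/β)·(ρ(x) + ρ(y)). -/

import Mathlib

/-- `ρ` is an admissible distance on `E` with constants `α, β, γ, r`:
it vanishes at `0`, is `α`-Lipschitz on the closed ball of radius `r`,
is radially increasing with rate at least `β‖v‖` inside the ball of radius `r`,
is at least `γ` outside that ball, and is symmetric. -/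
def IsAdmissibleDistance {E : Type*} [NormedAddCommGroup E] [NormedSpace ℝ E]
    (ρ : E → ℝ) (α β γ r : ℝ) : Prop :=
  ρ 0 = 0 ∧
  (∀ x y : E, ‖x‖ ≤ r → ‖y‖ ≤ r → |ρ x - ρ y| ≤ α * ‖x - y‖) ∧
  (∀ v : E, v ≠ 0 → ‖v‖ < r → ∀ t ∈ Set.Ioo (0 : ℝ) 1,
    DifferentiableAt ℝ (fun s : ℝ => ρ (s • v)) t ∧
    β * ‖v‖ ≤ deriv (fun s : ℝ => ρ (s • v)) t) ∧
  (∀ v : E, r ≤ ‖v‖ → γ ≤ ρ v) ∧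
  (∀ v : E, ρ (-v) = ρ v)

lemma admissible_lower_bound {E : Type*} [NormedAddCommGroup E] [NormedSpace ℝ E]
    (α β γ r : ℝ) (hα : 1 ≤ α) (hβ0 : 0 < β)
    (ρ : E → ℝ) (hρ : IsAdmissibleDistance ρ α β γ r)
    (v : E) (hv : ‖v‖ < r) : β * ‖v‖ ≤ ρ v := by
  obtain ⟨h0, hlip, hder, -, -⟩ := hρ
  rcases eq_or_ne v 0 with rfl | hv0
  · simp [h0]
  have hα0 : (0:ℝ) ≤ α := le_trans zero_le_one hα
  set f : ℝ → ℝ := fun s => ρ (s • v) with hf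
  have hfc : ContinuousOn f (Set.Icc 0 1) := by
    refine LipschitzOnWith.continuousOn (K := ⟨α * ‖v‖, by positivity⟩)
      (LipschitzOnWith.of_dist_le_mul ?_)
    intro s hs t ht
    simp only [Real.dist_eq]
    have h1 : ‖s • v‖ ≤ r := by
      rw [norm_smul, Real.norm_eq_abs, abs_of_nonneg hs.1]
      calc s * ‖v‖ ≤ 1 * ‖v‖ := by
            exact mul_le_mul_of_nonneg_right hs.2 (norm_nonneg v)
        _ ≤ r := by rw [one_mul]; exact hv.le
    have h2 : ‖t • v‖ ≤ r := by
      rw [norm_smul, Real.norm_eq_abs, abs_of_nonneg ht.1]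
      calc t * ‖v‖ ≤ 1 * ‖v‖ := by
            exact mul_le_mul_of_nonneg_right ht.2 (norm_nonneg v)
        _ ≤ r := by rw [one_mul]; exact hv.le
    have := hlip (s • v) (t • v) h1 h2
    rw [← sub_smul, norm_smul, Real.norm_eq_abs] at this
    calc |f s - f t| ≤ α * (|s - t| * ‖v‖) := this
      _ = ↑(⟨α * ‖v‖, by positivity⟩ : NNReal) * |s - t| := by push_cast; ring
  set g : ℝ → ℝ := fun s => f s - β * ‖v‖ * s with hg
  have hgmono : MonotoneOn g (Set.Icc 0 1) := by
    have hint : interior (Set.Icc (0:ℝ) 1) = Set.Ioo 0 1 := interior_Icc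
    refine monotoneOn_of_deriv_nonneg (convex_Icc 0 1)
      (hfc.sub (Continuous.continuousOn (by continuity))) ?_ ?_
    · intro t ht
      rw [hint] at ht
      exact ((hder v hv0 hv t ht).1.sub (by fun_prop)).differentiableWithinAt
    · intro t ht
      rw [hint] at ht
      have hd := hder v hv0 hv t ht
      have hdlin : DifferentiableAt ℝ (fun s : ℝ => β * ‖v‖ * s) t := by fun_prop
      have : deriv g t = deriv f t - β * ‖v‖ := by
        rw [hg, deriv_fun_sub hd.1 hdlin, deriv_const_mul _ differentiableAt_id]
        simp
        rfl
      rw [this]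
      linarith [hd.2]
  have := hgmono (Set.left_mem_Icc.mpr zero_le_one) (Set.right_mem_Icc.mpr zero_le_one)
    zero_le_one
  simp only [hg, hf, zero_smul, one_smul, h0, mul_zero, mul_one, sub_zero, zero_sub] at this
  linarith

/-- Weak triangle inequality for an admissible distance: with `δ = min(r,γ)/(4α)`,
for all `x, y` in the open ball of radius `δ` about `0`,
`ρ(x + y) ≤ (α/β)(ρ(x) + ρ(y))`. -/
theorem admissible_distance_weak_triangle
    {E : Type*} [NormedAddCommGroup E] [NormedSpace ℝ E]
    (α β γ r : ℝ) (hα : 1 ≤ α) (hβ0 : 0 < β) (hβ1 : β ≤ 1) (hγ : 0 < γ) (hr : 0 < r)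
    (ρ : E → ℝ) (hρ : IsAdmissibleDistance ρ α β γ r)
    (δ : ℝ) (hδ : δ = min r γ / (4 * α)) :
    ∀ x y : E, ‖x‖ < δ → ‖y‖ < δ → ρ (x + y) ≤ (α / β) * (ρ x + ρ y) := by
  intro x y hx hy
  have hα0 : (0:ℝ) < α := lt_of_lt_of_le zero_lt_one hα
  have hδr : δ ≤ r / 4 := by
    rw [hδ]
    apply div_le_div₀ (by positivity) (min_le_left _ _) (by positivity)
    nlinarith
  obtain ⟨h0, hlip, -, -, -⟩ := hρ.imp id id
  -- upper bound: ρ(x+y) ≤ α ‖x+y‖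
  have hxy : ‖x + y‖ ≤ r := by
    calc ‖x + y‖ ≤ ‖x‖ + ‖y‖ := norm_add_le x y
      _ ≤ r / 4 + r / 4 := add_le_add (hx.le.trans hδr) (hy.le.trans hδr)
      _ ≤ r := by linarith
  have hup : ρ (x + y) ≤ α * ‖x + y‖ := by
    have := hρ.2.1 (x + y) 0 hxy (by simpa using hr.le)
    simp only [sub_zero, hρ.1] at this
    exact (abs_le.mp this).2
  have hlx : β * ‖x‖ ≤ ρ x := admissible_lower_bound α β γ r hα hβ0 ρ hρ x
    (hx.trans_le (hδr.trans (by linarith)))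
  have hly : β * ‖y‖ ≤ ρ y := admissible_lower_bound α β γ r hα hβ0 ρ hρ y
    (hy.trans_le (hδr.trans (by linarith)))
  have hnorm : ‖x + y‖ ≤ ‖x‖ + ‖y‖ := norm_add_le x y
  rw [div_mul_eq_mul_div, le_div_iff₀ hβ0]
  have h1 : ρ (x + y) * β ≤ α * ‖x + y‖ * β := mul_le_mul_of_nonneg_right hup hβ0.le
  have h2 : α * ‖x + y‖ * β ≤ α * (‖x‖ + ‖y‖) * β :=
    mul_le_mul_of_nonneg_right (mul_le_mul_of_nonneg_left hnorm hα0.le) hβ0.le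
  have h3 : α * (β * ‖x‖ + β * ‖y‖) ≤ α * (ρ x + ρ y) :=
    mul_le_mul_of_nonneg_left (add_le_add hlx hly) hα0.le
  nlinarith
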